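/- Let X ⊆ ℂ^N be a closed set, Σ ⊆ ℂ^d a set with 0 ∈ Σ̄, and p : X → ℂ^d a proper continuous map such that p : X \ p⁻¹(Σ) → Δ' \ Σ is a covering map of degree k ≥ 2 onto a punctured neighborhood. Suppose v is a unit vector and η, δ > 0 are such that the cone C_{η,δ} = {w : ‖w − tv‖ < ηt for some t ∈ (0,δ)} is disjoint from Σ and simply connected. If γ₁, γ₂ : [0,ε) → X are distinct lifts of t ↦ tv and p is 1-Lipschitz, then every path β in X from γ₁(t) to γ₂(t) satisfies length(β) ≥ length(p∘β) ≥ 2ηt; hence d_{X,inn}(γ₁(t), γ₂(t)) ≥ 2ηt. -/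

import Mathlib

open Set Metric ENNReal Filter Topology

/-- The inner (length) distance on a subset `X` of a normed space. -/
noncomputable def innerDist {E : Type*} [NormedAddCommGroup E] (X : Set E) (x y : E) : ℝ≥0∞ :=
  ⨅ γ ∈ {γ : ℝ → E | ContinuousOn γ (Set.Icc 0 1) ∧ γ 0 = x ∧ γ 1 = y ∧
      ∀ t ∈ Set.Icc (0:ℝ) 1, γ t ∈ X}, eVariationOn γ (Set.Icc 0 1)

/-- The open cone `C_{η,δ} = {w : ‖w − t·v‖ < η·t for some t ∈ (0,δ)}` about direction `v`. -/
def dirCone {F : Type*} [NormedAddCommGroup F] [NormedSpace ℝ F]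
    (v : F) (η δ : ℝ) : Set F :=
  {w | ∃ t ∈ Set.Ioo (0:ℝ) δ, ‖w - t • v‖ < η * t}


lemma contOn_union_closed {α β : Type*} [TopologicalSpace α] [TopologicalSpace β]
    {f : α → β} {s t : Set α} (hs : IsClosed s) (ht : IsClosed t)
    (hfs : ContinuousOn f s) (hft : ContinuousOn f t) : ContinuousOn f (s ∪ t) := by
  intro x hx
  have h1 : ContinuousWithinAt f s x := by
    by_cases h : x ∈ s
    · exact hfs x h
    · exact continuousWithinAt_of_notMem_closure (by rwa [hs.closure_eq])
  have h2 : ContinuousWithinAt f t x := by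
    by_cases h : x ∈ t
    · exact hft x h
    · exact continuousWithinAt_of_notMem_closure (by rwa [ht.closure_eq])
  exact h1.union h2

section Lift

variable {E B : Type*} [TopologicalSpace E] [TopologicalSpace B] {f : E → B}

/-- One step of the homotopy lifting: a lift at level `s'` built from a lift at level `s`. -/
lemma lift_step (hf : IsCoveringMap f) {H : ℝ × ℝ → B} (hH : Continuous H)
    {n : ℕ} (hn : 0 < n) {s s' : ℝ} (hss' : s ≤ s')
    (hleft : H (0, s') = H (0, s)) (hright : H (1, s') = H (1, s))
    (hrect : ∀ i : ℕ, i < n → ∃ (b : B) (T : Bundle.Trivialization (f ⁻¹' {b} : Set E) f),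
      ∀ x ∈ Icc ((i : ℝ) / n) (((i : ℝ) + 1) / n), ∀ y ∈ Icc s s', H (x, y) ∈ T.baseSet)
    {h : ℝ → E} (hh : ContinuousOn h (Icc 0 1))
    (hlift : ∀ x ∈ Icc (0:ℝ) 1, f (h x) = H (x, s)) :
    ∃ h' : ℝ → E, ContinuousOn h' (Icc 0 1) ∧ (∀ x ∈ Icc (0:ℝ) 1, f (h' x) = H (x, s')) ∧
      h' 0 = h 0 ∧ h' 1 = h 1 := by
  classical
  choose bp T hT using hrect
  have hn' : (0:ℝ) < n := by exact_mod_cast hn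
  have key : ∀ i, ∀ _ : i ≤ n, ∃ h' : ℝ → E,
      ContinuousOn h' (Icc 0 ((i:ℝ)/n)) ∧
      (∀ x ∈ Icc (0:ℝ) ((i:ℝ)/n), f (h' x) = H (x, s')) ∧ h' 0 = h 0 ∧
      (∀ hi' : i < n, h' ((i:ℝ)/n) =
        (T i hi').toOpenPartialHomeomorph.symm (H ((i:ℝ)/n, s'), ((T i hi') (h ((i:ℝ)/n))).2)) ∧
      (i = n → h' 1 = h 1) := by
    intro i
    induction i with
    | zero =>
      intro _
      simp only [Nat.cast_zero, zero_div]
      refine ⟨fun _ => h 0, continuousOn_const, ?_, rfl, ?_, ?_⟩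
      · intro x hx
        have hx0 : x = 0 := le_antisymm hx.2 hx.1
        rw [hx0, hlift 0 (by simp [zero_le_one]), ← hleft]
      · intro hi'
        have hbase : H (0, s) ∈ (T 0 hi').baseSet := by
          have := hT 0 hi' 0 ⟨by simp, by positivity⟩ s ⟨le_rfl, hss'⟩
          simpa using this
        have hfh : f (h 0) = H (0, s) := hlift 0 (by simp [zero_le_one])
        have hsrc : h 0 ∈ (T 0 hi').source := by
          rw [Bundle.Trivialization.mem_source, hfh]; exact hbase
        have hmk : ((f (h 0), ((T 0 hi') (h 0)).2) : B × _) = (T 0 hi') (h 0) :=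
          (T 0 hi').mk_proj_snd hsrc
        rw [hleft, ← hfh, hmk]
        exact ((T 0 hi').toOpenPartialHomeomorph.left_inv hsrc).symm
      · intro h0n; omega
    | succ i ih =>
      intro hi1
      obtain ⟨h', hc', hl', h0', hlink, _⟩ := ih (Nat.le_of_succ_le hi1)
      have hiin : i < n := hi1
      set Ti := T i hiin with hTidef
      set a : ℝ := (i:ℝ)/n with hadef
      set bb : ℝ := ((i:ℝ)+1)/n with hbdef
      have h1n : (0:ℝ) < 1/n := by positivity
      have haltb : a < bb := by
        rw [hadef, hbdef, div_lt_div_iff_of_pos_right hn']; linarith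
      have hab : a ≤ bb := haltb.le
      have ha0 : (0:ℝ) ≤ a := by positivity
      have hbb1 : bb ≤ 1 := by
        rw [hbdef, div_le_one hn']
        have : ((i:ℝ)+1) = ((i+1 : ℕ) : ℝ) := by push_cast; ring
        rw [this]; exact_mod_cast hi1
      have hsub : Icc a bb ⊆ Icc 0 1 := Icc_subset_Icc ha0 hbb1
      have hbaseX : ∀ x ∈ Icc a bb, ∀ y ∈ Icc s s', H (x, y) ∈ Ti.baseSet := hT i hiin
      set ℓ := (Ti (h a)).2 with hldef
      set g : ℝ → E := fun x => Ti.toOpenPartialHomeomorph.symm (H (x, s'), ℓ) with hgdef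
      have hmemT' : ∀ x ∈ Icc a bb, ((H (x, s'), ℓ) : B × _) ∈ Ti.target :=
        fun x hx => Ti.mem_target.2 (hbaseX x hx s' ⟨hss', le_rfl⟩)
      have hmemTs : ∀ x ∈ Icc a bb, ((H (x, s), ℓ) : B × _) ∈ Ti.target :=
        fun x hx => Ti.mem_target.2 (hbaseX x hx s ⟨le_rfl, hss'⟩)
      have hglift : ∀ x ∈ Icc a bb, f (g x) = H (x, s') :=
        fun x hx => Ti.proj_symm_apply (hmemT' x hx)
      have hgcont : ContinuousOn g (Icc a bb) := by
        apply Ti.toOpenPartialHomeomorph.continuousOn_symm.comp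
        · exact ((hH.comp (continuous_id.prodMk continuous_const)).prodMk
            continuous_const).continuousOn
        · exact fun x hx => hmemT' x hx
      -- identify h with the section over [a, bb] at level s
      have hfa : f (h a) = H (a, s) := hlift a (hsub (left_mem_Icc.2 hab))
      have hsrc_a : h a ∈ Ti.source := by
        rw [Bundle.Trivialization.mem_source, hfa]
        exact hbaseX a (left_mem_Icc.2 hab) s ⟨le_rfl, hss'⟩
      have hsec : EqOn h (fun x => Ti.toOpenPartialHomeomorph.symm (H (x, s), ℓ)) (Icc a bb) := by
        apply hf.eqOn_of_comp_eqOn isPreconnected_Icc (hh.mono hsub) ?_ ?_ (left_mem_Icc.2 hab) ?_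
        · apply Ti.toOpenPartialHomeomorph.continuousOn_symm.comp
          · exact ((hH.comp (continuous_id.prodMk continuous_const)).prodMk
              continuous_const).continuousOn
          · exact fun x hx => hmemTs x hx
        · intro x hx
          show f (h x) = f _
          rw [hlift x (hsub hx), Ti.proj_symm_apply (hmemTs x hx)]
        · show h a = Ti.toOpenPartialHomeomorph.symm (H (a, s), ℓ)
          rw [← hfa, hldef, Ti.mk_proj_snd hsrc_a]
          exact (Ti.toOpenPartialHomeomorph.left_inv hsrc_a).symm
      have hhb : h bb = Ti.toOpenPartialHomeomorph.symm (H (bb, s), ℓ) :=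
        hsec (right_mem_Icc.2 hab)
      -- the extended lift
      set h'' : ℝ → E := fun x => if x ≤ a then h' x else g x with h''def
      have heq1 : EqOn h'' h' (Icc 0 a) := fun x hx => if_pos hx.2
      have hga : g a = h' a := (hlink hiin).symm
      have heq2 : EqOn h'' g (Icc a bb) := by
        intro x hx
        by_cases hxa : x ≤ a
        · have hxeq : x = a := le_antisymm hxa hx.1
          rw [hxeq]
          show (if a ≤ a then h' a else g a) = g a
          rw [if_pos le_rfl, hga]
        · rw [h''def]; simp only [if_neg hxa]
      have hcont'' : ContinuousOn h'' (Icc 0 bb) := by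
        rw [← Icc_union_Icc_eq_Icc ha0 hab]
        exact contOn_union_closed isClosed_Icc isClosed_Icc (hc'.congr heq1)
          (hgcont.congr heq2)
      have hlift'' : ∀ x ∈ Icc (0:ℝ) bb, f (h'' x) = H (x, s') := by
        intro x hx
        by_cases hxa : x ≤ a
        · rw [heq1 ⟨hx.1, hxa⟩]; exact hl' x ⟨hx.1, hxa⟩
        · rw [heq2 ⟨(not_le.1 hxa).le, hx.2⟩]
          exact hglift x ⟨(not_le.1 hxa).le, hx.2⟩
      have hcast : ((i+1 : ℕ) : ℝ)/n = bb := by push_cast; rw [hbdef]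
      refine ⟨h'', by rwa [hcast], by rw [hcast]; exact hlift'', ?_, ?_, ?_⟩
      · rw [h''def]; simp only [if_pos ha0]; exact h0'
      · -- the linking invariant at i+1
        intro hi'
        rw [hcast]
        set T' := T (i+1) hi' with hT'def
        set ℓ' := (T' (h bb)).2 with hl'def
        have hbase' : ∀ y ∈ Icc s s', H (bb, y) ∈ T'.baseSet := by
          intro y hy
          refine hT (i+1) hi' bb ⟨hcast.le, ?_⟩ y hy
          rw [hbdef]
          exact (div_le_div_iff_of_pos_right hn').2 (by push_cast; linarith)
        have hfb : f (h bb) = H (bb, s) := hlift bb (hsub (right_mem_Icc.2 hab))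
        have hsrc_b : h bb ∈ T'.source := by
          rw [Bundle.Trivialization.mem_source, hfb]
          exact hbase' s ⟨le_rfl, hss'⟩
        set u : ℝ → E := fun y => Ti.toOpenPartialHomeomorph.symm (H (bb, y), ℓ) with hudef
        set w : ℝ → E := fun y => T'.toOpenPartialHomeomorph.symm (H (bb, y), ℓ') with hwdef
        have hmemu : ∀ y ∈ Icc s s', ((H (bb, y), ℓ) : B × _) ∈ Ti.target :=
          fun y hy => Ti.mem_target.2 (hbaseX bb (right_mem_Icc.2 hab) y hy)
        have hmemw : ∀ y ∈ Icc s s', ((H (bb, y), ℓ') : B × _) ∈ T'.target :=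
          fun y hy => T'.mem_target.2 (hbase' y hy)
        have huw : EqOn u w (Icc s s') := by
          apply hf.eqOn_of_comp_eqOn isPreconnected_Icc ?_ ?_ ?_ (left_mem_Icc.2 hss') ?_
          · apply Ti.toOpenPartialHomeomorph.continuousOn_symm.comp
            · exact ((hH.comp (continuous_const.prodMk continuous_id)).prodMk
                continuous_const).continuousOn
            · exact fun y hy => hmemu y hy
          · apply T'.toOpenPartialHomeomorph.continuousOn_symm.comp
            · exact ((hH.comp (continuous_const.prodMk continuous_id)).prodMk
                continuous_const).continuousOn
            · exact fun y hy => hmemw y hy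
          · intro y hy
            show f (u y) = f (w y)
            rw [hudef, hwdef]
            simp only
            rw [Ti.proj_symm_apply (hmemu y hy), T'.proj_symm_apply (hmemw y hy)]
          · show u s = w s
            have hu : u s = h bb := hhb.symm
            have hw : w s = h bb := by
              rw [hwdef]
              simp only
              rw [← hfb, hl'def, T'.mk_proj_snd hsrc_b]
              exact T'.toOpenPartialHomeomorph.left_inv hsrc_b
            rw [hu, hw]
        have hfin : u s' = w s' := huw (right_mem_Icc.2 hss')
        have hbnota : ¬ bb ≤ a := not_le.2 haltb
        show (if bb ≤ a then h' bb else g bb) = _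
        rw [if_neg hbnota]
        exact hfin
      · -- the case i+1 = n : the right endpoint matches
        intro hin
        have hbb_eq : bb = 1 := by
          rw [hbdef]
          have : ((i:ℝ)+1) = (n:ℝ) := by exact_mod_cast congrArg (Nat.cast : ℕ → ℝ) hin
          rw [this, div_self hn'.ne']
        have hbnota : ¬ (1:ℝ) ≤ a := not_le.2 (hbb_eq ▸ haltb)
        show (if (1:ℝ) ≤ a then h' 1 else g 1) = h 1
        rw [if_neg hbnota]
        have : g 1 = Ti.toOpenPartialHomeomorph.symm (H (1, s), ℓ) := by
          rw [hgdef]; simp only; rw [hright]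
        rw [this, ← hbb_eq, ← hhb]
  obtain ⟨h', hc, hl, h0, _, h1⟩ := key n le_rfl
  have hnn : ((n:ℝ))/n = 1 := div_self hn'.ne'
  exact ⟨h', by rwa [hnn] at hc, by rw [hnn] at hl; exact hl, h0, h1 rfl⟩

/-- Homotopy lifting along the second coordinate, for a homotopy fixing the two endpoints. -/
lemma lift_homotopy (hf : IsCoveringMap f) {H : ℝ × ℝ → B} (hH : Continuous H)
    (hleft : ∀ y ∈ Icc (0:ℝ) 1, H (0, y) = H (0, 0))
    (hright : ∀ y ∈ Icc (0:ℝ) 1, H (1, y) = H (1, 0))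
    {h₀ : ℝ → E} (hh₀ : ContinuousOn h₀ (Icc 0 1))
    (hlift : ∀ x ∈ Icc (0:ℝ) 1, f (h₀ x) = H (x, 0)) :
    ∃ h₁ : ℝ → E, ContinuousOn h₁ (Icc 0 1) ∧ (∀ x ∈ Icc (0:ℝ) 1, f (h₁ x) = H (x, 1)) ∧
      h₁ 0 = h₀ 0 ∧ h₁ 1 = h₀ 1 := by
  classical
  -- evenly covered neighbourhoods
  have hclo : IsClopen (range f) := by
    constructor
    · rw [← isOpen_compl_iff, isOpen_iff_forall_mem_open]
      intro y hy
      obtain ⟨_, U, hyU, hU, _, Hm, hHm⟩ := hf y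
      refine ⟨U, fun u hu ⟨e', he'⟩ => hy ⟨(Hm ⟨e', show f e' ∈ U by rw [he']; exact hu⟩).2.1,
        (Hm ⟨e', show f e' ∈ U by rw [he']; exact hu⟩).2.2⟩, hU, hyU⟩
    · rw [isOpen_iff_forall_mem_open]
      rintro y ⟨e, rfl⟩
      obtain ⟨_, U, hyU, hU, _, Hm, hHm⟩ := hf (f e)
      refine ⟨U, fun u hu => ⟨(Hm.symm (⟨u, hu⟩, ⟨e, Set.mem_singleton _⟩)).1, ?_⟩, hU, hyU⟩
      have := hHm (Hm.symm (⟨u, hu⟩, ⟨e, Set.mem_singleton _⟩))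
      rw [Homeomorph.apply_symm_apply] at this
      exact this.symm
  have hrange : ∀ q : ℝ × ℝ, (f ⁻¹' {H q}).Nonempty := by
    have hc : IsClopen (H ⁻¹' range f) := hclo.preimage hH
    rcases isClopen_iff.1 hc with h | h
    · have : ((0:ℝ), (0:ℝ)) ∈ H ⁻¹' range f :=
        ⟨h₀ 0, hlift 0 (left_mem_Icc.2 zero_le_one)⟩
      rw [h] at this
      exact absurd this (Set.notMem_empty _)
    · intro q
      have : q ∈ H ⁻¹' range f := by rw [h]; trivial
      obtain ⟨e, he⟩ := this
      exact ⟨e, he⟩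
  have hec : ∀ w : B, (f ⁻¹' {w}).Nonempty →
      ∃ T : Bundle.Trivialization (f ⁻¹' {w} : Set E) f, w ∈ T.baseSet :=
    fun w hw => by
      haveI := hw.to_subtype
      exact ⟨(hf w).toTrivialization, (hf w).mem_toTrivialization_baseSet⟩
  choose T hT using hec
  -- Lebesgue number for the pulled-back cover of the unit square
  have hcomp : IsCompact (Icc (0:ℝ) 1 ×ˢ Icc (0:ℝ) 1) := isCompact_Icc.prod isCompact_Icc
  have hopen : ∀ q : ℝ × ℝ, IsOpen (H ⁻¹' (T (H q) (hrange q)).baseSet) :=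
    fun q => (T _ _).open_baseSet.preimage hH
  have hcover : (Icc (0:ℝ) 1 ×ˢ Icc (0:ℝ) 1) ⊆ ⋃ q : ℝ × ℝ, H ⁻¹' (T (H q) (hrange q)).baseSet :=
    fun z _ => mem_iUnion.2 ⟨z, hT (H z) (hrange z)⟩
  obtain ⟨δ, hδ, hball⟩ := lebesgue_number_lemma_of_metric hcomp hopen hcover
  obtain ⟨m, hm⟩ := exists_nat_one_div_lt hδ
  set n : ℕ := m + 1 with hndef
  have hn : 0 < n := Nat.succ_pos m
  have hn' : (0:ℝ) < n := by exact_mod_cast hn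
  have hmesh : 1 / (n:ℝ) < δ := by rw [hndef]; push_cast; exact hm
  -- every grid rectangle maps into an evenly covered set
  have hrect : ∀ i j : ℕ, i < n → j < n →
      ∃ (b : B) (Tr : Bundle.Trivialization (f ⁻¹' {b} : Set E) f),
        ∀ x ∈ Icc ((i : ℝ) / n) (((i : ℝ) + 1) / n),
          ∀ y ∈ Icc ((j : ℝ) / n) (((j : ℝ) + 1) / n), H (x, y) ∈ Tr.baseSet := by
    intro i j hi hj
    have hmem : ((i:ℝ)/n, (j:ℝ)/n) ∈ Icc (0:ℝ) 1 ×ˢ Icc (0:ℝ) 1 := by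
      constructor <;> constructor
      · positivity
      · rw [div_le_one hn']; exact_mod_cast hi.le
      · positivity
      · rw [div_le_one hn']; exact_mod_cast hj.le
    obtain ⟨w, hw⟩ := hball _ hmem
    refine ⟨H w, T (H w) (hrange w), ?_⟩
    intro x hx y hy
    apply hw
    rw [mem_ball, Prod.dist_eq]
    have h1 : dist x ((i:ℝ)/n) < δ := by
      rw [Real.dist_eq, abs_of_nonneg (by linarith [hx.1])]
      have hxx : x ≤ ((i:ℝ)+1)/n := hx.2
      rw [add_div] at hxx
      linarith
    have h2 : dist y ((j:ℝ)/n) < δ := by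
      rw [Real.dist_eq, abs_of_nonneg (by linarith [hy.1])]
      have hyy : y ≤ ((j:ℝ)+1)/n := hy.2
      rw [add_div] at hyy
      linarith
    exact max_lt h1 h2
  -- outer induction on the homotopy levels
  have key : ∀ j, j ≤ n → ∃ hj : ℝ → E, ContinuousOn hj (Icc 0 1) ∧
      (∀ x ∈ Icc (0:ℝ) 1, f (hj x) = H (x, (j:ℝ)/n)) ∧ hj 0 = h₀ 0 ∧ hj 1 = h₀ 1 := by
    intro j
    induction j with
    | zero =>
      intro _
      refine ⟨h₀, hh₀, ?_, rfl, rfl⟩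
      simpa using hlift
    | succ j ih =>
      intro hj1
      obtain ⟨hj, hjc, hjl, hj0, hj1'⟩ := ih (Nat.le_of_succ_le hj1)
      have hjn : j < n := hj1
      have hsle : (j:ℝ)/n ≤ ((j:ℝ)+1)/n :=
        (div_le_div_iff_of_pos_right hn').2 (by linarith)
      have hjmem : (j:ℝ)/n ∈ Icc (0:ℝ) 1 :=
        ⟨by positivity, by rw [div_le_one hn']; exact_mod_cast hjn.le⟩
      have hjmem' : ((j:ℝ)+1)/n ∈ Icc (0:ℝ) 1 := by
        constructor
        · positivity
        · rw [div_le_one hn']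
          have : ((j:ℝ)+1) = ((j+1:ℕ):ℝ) := by push_cast; ring
          rw [this]; exact_mod_cast hj1
      obtain ⟨h', hc', hl', h0', h1''⟩ := lift_step hf hH hn hsle
        (by rw [hleft _ hjmem', hleft _ hjmem]) (by rw [hright _ hjmem', hright _ hjmem])
        (fun i hi => hrect i j hi hjn) hjc hjl
      refine ⟨h', hc', ?_, by rw [h0', hj0], by rw [h1'', hj1']⟩
      intro x hx
      have : ((j+1:ℕ):ℝ) = (j:ℝ)+1 := by push_cast; ring
      rw [this]
      exact hl' x hx
  obtain ⟨h₁, hc, hl, h0, h1⟩ := key n le_rfl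
  refine ⟨h₁, hc, ?_, h0, h1⟩
  intro x hx
  have := hl x hx
  rwa [div_self hn'.ne'] at this

end Lift

/-- If `p = P|_X` is a covering of degree `k ≥ 2` away from `Σ`, the cone `C_{η,δ}` about a
unit direction `v` is disjoint from `Σ` and simply connected, `γ₁ ≠ γ₂` are lifts of `t ↦ t·v`,
and `P` is 1-Lipschitz, then every path `β` in `X` from `γ₁(t)` to `γ₂(t)` satisfies
`length(β) ≥ length(P∘β) ≥ 2ηt`; hence `d_{X,inn}(γ₁(t), γ₂(t)) ≥ 2ηt`. -/
theorem stmt_17 {N d : ℕ}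
    (X : Set (EuclideanSpace ℂ (Fin N))) (hXcl : IsClosed X)
    (P : EuclideanSpace ℂ (Fin N) → EuclideanSpace ℂ (Fin d)) (hP : LipschitzWith 1 P)
    (hPcont : Continuous P)
    (S Δ' : Set (EuclideanSpace ℂ (Fin d))) (hS0 : (0:EuclideanSpace ℂ (Fin d)) ∈ closure S)
    (v : EuclideanSpace ℂ (Fin d)) (hv : ‖v‖ = 1) (η δ : ℝ) (hη : 0 < η) (hδ : 0 < δ)
    (hcone : dirCone v η δ ⊆ Δ' \ S)
    (hsc : SimplyConnectedSpace ↥(dirCone v η δ))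
    (hcov : IsCoveringMap
      (fun z : {z : EuclideanSpace ℂ (Fin N) // z ∈ X ∧ P z ∈ Δ' \ S} =>
        (⟨P z.1, z.2.2⟩ : {w : EuclideanSpace ℂ (Fin d) // w ∈ Δ' \ S})))
    (k : ℕ) (hk : 2 ≤ k)
    (hdeg : ∀ w : {w : EuclideanSpace ℂ (Fin d) // w ∈ Δ' \ S},
      Nat.card {z : {z : EuclideanSpace ℂ (Fin N) // z ∈ X ∧ P z ∈ Δ' \ S} //
        P z.1 = w.1} = k)
    (ε : ℝ) (hε : 0 < ε) (γ₁ γ₂ : ℝ → EuclideanSpace ℂ (Fin N))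
    (hγ₁c : ContinuousOn γ₁ (Set.Ioo 0 ε)) (hγ₂c : ContinuousOn γ₂ (Set.Ioo 0 ε))
    (hγ₁ : ∀ t ∈ Set.Ioo (0:ℝ) ε, γ₁ t ∈ X ∧ P (γ₁ t) = t • v)
    (hγ₂ : ∀ t ∈ Set.Ioo (0:ℝ) ε, γ₂ t ∈ X ∧ P (γ₂ t) = t • v)
    (hne : ∀ t ∈ Set.Ioo (0:ℝ) ε, γ₁ t ≠ γ₂ t) :
    ∀ t ∈ Set.Ioo (0:ℝ) (min ε δ),
      (∀ β : ℝ → EuclideanSpace ℂ (Fin N), ContinuousOn β (Set.Icc 0 1) →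
        β 0 = γ₁ t → β 1 = γ₂ t → (∀ s ∈ Set.Icc (0:ℝ) 1, β s ∈ X) →
          ENNReal.ofReal (2 * η * t) ≤ eVariationOn (P ∘ β) (Set.Icc 0 1) ∧
          eVariationOn (P ∘ β) (Set.Icc 0 1) ≤ eVariationOn β (Set.Icc 0 1)) ∧
      ENNReal.ofReal (2 * η * t) ≤ innerDist X (γ₁ t) (γ₂ t) := by
  classical
  haveI := hsc
  intro t ht
  have htε : t ∈ Set.Ioo (0:ℝ) ε := ⟨ht.1, ht.2.trans_le (min_le_left _ _)⟩
  have htδ : t < δ := ht.2.trans_le (min_le_right _ _)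
  have hηt : 0 < η * t := mul_pos hη ht.1
  have hbmem : t • v ∈ dirCone v η δ := ⟨t, ⟨ht.1, htδ⟩, by simpa using hηt⟩
  have main : ∀ β : ℝ → EuclideanSpace ℂ (Fin N), ContinuousOn β (Set.Icc 0 1) →
      β 0 = γ₁ t → β 1 = γ₂ t → (∀ s ∈ Set.Icc (0:ℝ) 1, β s ∈ X) →
      ENNReal.ofReal (2 * η * t) ≤ eVariationOn (P ∘ β) (Set.Icc 0 1) ∧
      eVariationOn (P ∘ β) (Set.Icc 0 1) ≤ eVariationOn β (Set.Icc 0 1) := by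
    intro β hβc hβ0 hβ1 hβX
    have hP0 : P (β 0) = t • v := by rw [hβ0]; exact (hγ₁ t htε).2
    have hP1 : P (β 1) = t • v := by rw [hβ1]; exact (hγ₂ t htε).2
    constructor
    · -- there is an escape point
      have hesc : ∃ s₀ ∈ Icc (0:ℝ) 1, P (β s₀) ∉ dirCone v η δ := by
        by_contra hcon
        push_neg at hcon
        have hconeX : ∀ s ∈ Icc (0:ℝ) 1, P (β s) ∈ Δ' \ S := fun s hs => hcone (hcon s hs)
        have hβI : Continuous fun x : unitInterval => β (x:ℝ) := hβc.restrict
        set apt : ↥(dirCone v η δ) := ⟨t • v, hbmem⟩ with haptdef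
        set c : Path apt apt :=
          { toFun := fun x => ⟨P (β (x:ℝ)), hcon x x.2⟩
            continuous_toFun := (hPcont.comp hβI).subtype_mk _
            source' := Subtype.ext (by
              show P (β ((0:unitInterval):ℝ)) = t • v
              rw [show ((0:unitInterval):ℝ) = (0:ℝ) from rfl, hP0])
            target' := Subtype.ext (by
              show P (β ((1:unitInterval):ℝ)) = t • v
              rw [show ((1:unitInterval):ℝ) = (1:ℝ) from rfl, hP1]) } with hcdef
        obtain ⟨F⟩ := SimplyConnectedSpace.paths_homotopic c (Path.refl apt)
        set ι : ↥(dirCone v η δ) → {w : EuclideanSpace ℂ (Fin d) // w ∈ Δ' \ S} :=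
          fun w => ⟨w.1, hcone w.2⟩ with hιdef
        have hιc : Continuous ι := continuous_subtype_val.subtype_mk _
        set pj : ℝ → unitInterval := fun x => Set.projIcc (0:ℝ) 1 zero_le_one x with hpjdef
        have hpj0 : pj 0 = 0 := Subtype.ext (by simp [hpjdef, Set.projIcc])
        have hpj1 : pj 1 = 1 := Subtype.ext (by simp [hpjdef, Set.projIcc])
        have hpjmem : ∀ x ∈ Icc (0:ℝ) 1, ((pj x : ℝ)) = x := by
          intro x hx; rw [hpjdef]; simp [Set.projIcc_of_mem zero_le_one hx]
        set Hmap : ℝ × ℝ → {w : EuclideanSpace ℂ (Fin d) // w ∈ Δ' \ S} :=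
          fun q => ι (F (pj q.2, pj q.1)) with hHdef
        have hHc : Continuous Hmap := by
          apply hιc.comp
          exact F.continuous.comp (((continuous_projIcc.comp continuous_snd).prodMk
            (continuous_projIcc.comp continuous_fst)))
        have hleftE : ∀ y ∈ Icc (0:ℝ) 1, Hmap (0, y) = Hmap (0, 0) := by
          intro y hy
          rw [hHdef]; simp only [hpj0]
          rw [F.source, F.source]
        have hrightE : ∀ y ∈ Icc (0:ℝ) 1, Hmap (1, y) = Hmap (1, 0) := by
          intro y hy
          rw [hHdef]; simp only [hpj1]
          rw [F.target, F.target]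
        set h₀f : ℝ → {z : EuclideanSpace ℂ (Fin N) // z ∈ X ∧ P z ∈ Δ' \ S} :=
          fun x => ⟨β (pj x : ℝ), hβX _ (pj x).2, hconeX _ (pj x).2⟩ with h₀def
        have hβpj : Continuous fun x : ℝ => β ((pj x : ℝ)) :=
          hβc.comp_continuous (continuous_subtype_val.comp continuous_projIcc)
            (fun x => (pj x).2)
        have h₀c : ContinuousOn h₀f (Icc 0 1) := (hβpj.subtype_mk _).continuousOn
        have hlift₀ : ∀ x ∈ Icc (0:ℝ) 1,
            (fun z : {z : EuclideanSpace ℂ (Fin N) // z ∈ X ∧ P z ∈ Δ' \ S} =>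
              (⟨P z.1, z.2.2⟩ : {w : EuclideanSpace ℂ (Fin d) // w ∈ Δ' \ S})) (h₀f x)
            = Hmap (x, 0) := by
          intro x hx
          rw [hHdef]
          simp only [hpj0]
          apply Subtype.ext
          show P (β (pj x : ℝ)) = ((ι (F (0, pj x)) : _)).1
          rw [F.apply_zero]
          rfl
        obtain ⟨h₁, h₁c, h₁l, h₁0, h₁1⟩ := lift_homotopy hcov hHc hleftE hrightE h₀c hlift₀
        have htop : ∀ x ∈ Icc (0:ℝ) 1, Hmap (x, 1) = ι apt := by
          intro x hx
          rw [hHdef]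
          simp only [hpj1]
          rw [F.apply_one]
          simp [Path.refl_apply]
        have hfh₁ : ∀ x ∈ Icc (0:ℝ) 1,
            (fun z : {z : EuclideanSpace ℂ (Fin N) // z ∈ X ∧ P z ∈ Δ' \ S} =>
              (⟨P z.1, z.2.2⟩ : {w : EuclideanSpace ℂ (Fin d) // w ∈ Δ' \ S})) (h₁ x)
            = ι apt := fun x hx => (h₁l x hx).trans (htop x hx)
        have hconst : h₁ 0 = h₁ 1 :=
          hcov.constOn_of_comp isPreconnected_Icc h₁c
            (fun a ha a' ha' => (hfh₁ a ha).trans (hfh₁ a' ha').symm)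
            (left_mem_Icc.2 zero_le_one) (right_mem_Icc.2 zero_le_one)
        have h01 : h₀f 0 = h₀f 1 := by rw [← h₁0, ← h₁1, hconst]
        have : β ((pj 0 : ℝ)) = β ((pj 1 : ℝ)) := congrArg Subtype.val h01
        rw [hpj0, hpj1] at this
        rw [show ((0:unitInterval):ℝ) = (0:ℝ) from rfl,
          show ((1:unitInterval):ℝ) = (1:ℝ) from rfl, hβ0, hβ1] at this
        exact hne t htε this
      obtain ⟨s₀, hs₀, hout⟩ := hesc
      have hdist : η * t ≤ ‖P (β s₀) - t • v‖ := by
        by_contra hlt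
        exact hout ⟨t, ⟨ht.1, htδ⟩, not_le.1 hlt⟩
      have e1 : ENNReal.ofReal (η * t) ≤ edist ((P ∘ β) 0) ((P ∘ β) s₀) := by
        rw [edist_dist]
        apply ENNReal.ofReal_le_ofReal
        rw [Function.comp_apply, Function.comp_apply, dist_eq_norm, hP0, norm_sub_rev]
        exact hdist
      have e2 : ENNReal.ofReal (η * t) ≤ edist ((P ∘ β) s₀) ((P ∘ β) 1) := by
        rw [edist_dist]
        apply ENNReal.ofReal_le_ofReal
        rw [Function.comp_apply, Function.comp_apply, dist_eq_norm, hP1]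
        exact hdist
      calc ENNReal.ofReal (2 * η * t)
          = ENNReal.ofReal (η * t) + ENNReal.ofReal (η * t) := by
            rw [← ENNReal.ofReal_add hηt.le hηt.le]; ring_nf
        _ ≤ edist ((P ∘ β) 0) ((P ∘ β) s₀) + edist ((P ∘ β) s₀) ((P ∘ β) 1) :=
            add_le_add e1 e2
        _ ≤ eVariationOn (P ∘ β) (Icc 0 1 ∩ Icc 0 s₀)
            + eVariationOn (P ∘ β) (Icc 0 1 ∩ Icc s₀ 1) := by
            apply add_le_add
            · exact eVariationOn.edist_le _ ⟨⟨le_rfl, zero_le_one⟩, ⟨le_rfl, hs₀.1⟩⟩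
                ⟨hs₀, ⟨hs₀.1, le_rfl⟩⟩
            · exact eVariationOn.edist_le _ ⟨hs₀, ⟨le_rfl, hs₀.2⟩⟩
                ⟨⟨zero_le_one, le_rfl⟩, ⟨hs₀.2, le_rfl⟩⟩
        _ = eVariationOn (P ∘ β) (Icc 0 1 ∩ Icc 0 1) :=
            eVariationOn.Icc_add_Icc _ hs₀.1 hs₀.2 hs₀
        _ = eVariationOn (P ∘ β) (Icc 0 1) := by rw [inter_self]
    · have := (hP.lipschitzOnWith (s := univ)).comp_eVariationOn_le
        (mapsTo_univ β (Icc (0:ℝ) 1))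
      simpa using this
  refine ⟨main, ?_⟩
  rw [innerDist]
  refine le_iInf₂ fun γ hγ => ?_
  obtain ⟨hc, h0, h1, hmem⟩ := hγ
  exact (main γ hc h0 h1 hmem).1.trans (main γ hc h0 h1 hmem).2
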